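/- arXiv:1501.02871 — 2 statements merged into one kernel-verified Lean document; each statement's English description precedes it below -/
import Mathlib

section
/- For all positive integers n, m and nonnegative integers s, r, a partially symmetric tensor G = (g_{ijkl}) belongs to C_{n,m}^{s,r} if and only if for all ξ ∈ I(n,s+2) and ζ ∈ I(m,r+2): Σ_{i,j=1}^n Σ_{k,l=1}^m g_{ijkl} ξ_i ξ_j ζ_k ζ_l − Σ_{i=1}^n ξ_i (Σ_{k,l=1}^m g_{iikl} ζ_k ζ_l) − Σ_{k=1}^m ζ_k (Σ_{i,j=1}^n g_{ijkk} ξ_i ξ_j) + Σ_{i=1}^n Σ_{k=1}^m g_{iikk} ξ_i ζ_k ≥ 0. In other words, C_{n,m}^{s,r} admits this polyhedral representation by finitely many linear inequalities. -/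
open MvPolynomial

/-- The bi-quadratic form `p_G` as a polynomial in the variables `x_1,…,x_n,y_1,…,y_m`. -/
noncomputable def biQuadPoly {n m : ℕ} (G : Fin n → Fin n → Fin m → Fin m → ℝ) :
    MvPolynomial (Fin n ⊕ Fin m) ℝ :=
  ∑ i, ∑ j, ∑ k, ∑ l, C (G i j k l) *
    X (Sum.inl i) * X (Sum.inl j) * X (Sum.inr k) * X (Sum.inr l)

open Finset Nat

section
variable {σ : Type*} [Fintype σ] [DecidableEq σ]

lemma nat_key (s : ℕ) (i j : σ) (a : σ → ℕ) (ha : ∑ t, a t = s + 2) :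
    (∏ t, (a t)!) *
      (∑ ξ ∈ piAntidiag (univ : Finset σ) s,
        if ξ + Pi.single i 1 + Pi.single j 1 = a then Nat.multinomial univ ξ else 0)
    = s ! * (a i * (a j - if i = j then 1 else 0)) := by
  by_cases hle : Pi.single i 1 + Pi.single j 1 ≤ a
  · set ξ0 : σ → ℕ := a - (Pi.single i 1 + Pi.single j 1) with hξ0
    have hcond : ∀ ξ : σ → ℕ, (ξ + Pi.single i 1 + Pi.single j 1 = a) ↔ ξ = ξ0 := by
      intro ξ
      constructor
      · intro h
        funext t
        have h1 := congrFun h t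
        have h2 := hle t
        simp only [Pi.add_apply, Pi.sub_apply, hξ0] at h1 h2 ⊢
        omega
      · rintro rfl
        funext t
        have h2 := hle t
        simp only [Pi.add_apply, Pi.sub_apply, hξ0] at h2 ⊢
        omega
    simp only [hcond]
    rw [Finset.sum_ite_eq' (piAntidiag (univ : Finset σ) s) ξ0 (fun ξ => Nat.multinomial univ ξ)]
    have hsum0 : ∑ t, ξ0 t = s := by
      have h2 : ∑ t, (Pi.single i 1 + Pi.single j 1 : σ → ℕ) t = 2 := by
        simp [Pi.single_apply, Finset.sum_add_distrib]
      have := Finset.sum_tsub_distrib (s := (univ : Finset σ)) (f := a)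
        (g := (Pi.single i 1 + Pi.single j 1 : σ → ℕ)) (fun t _ => hle t)
      simp only [hξ0, Pi.sub_apply] at this ⊢
      omega
    have hmem : ξ0 ∈ piAntidiag (univ : Finset σ) s := by
      rw [Finset.mem_piAntidiag]
      exact ⟨hsum0, fun _ _ => mem_univ _⟩
    rw [if_pos hmem]
    have hspec : (∏ t, (ξ0 t)!) * Nat.multinomial univ ξ0 = s ! := by
      have := Nat.multinomial_spec (univ : Finset σ) ξ0
      rwa [hsum0] at this
    by_cases hij : i = j
    · subst hij
      have h2 : 2 ≤ a i := by have := hle i; simpa using this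
      have hprod : ∏ t, (a t)! = (∏ t, (ξ0 t)!) * (a i * (a i - 1)) := by
        have hpt : ∀ t, (a t)! = (ξ0 t)! * (if t = i then a i * (a i - 1) else 1) := by
          intro t
          by_cases ht : t = i
          · subst ht
            have hv : ξ0 t = a t - 2 := by simp [hξ0, Pi.single_apply]
            rw [hv, if_pos rfl]
            have e1 : a t - 1 - 1 = a t - 2 := by omega
            rw [← Nat.mul_factorial_pred (by omega : a t ≠ 0),
                ← Nat.mul_factorial_pred (by omega : a t - 1 ≠ 0), e1]
            ring
          · have hv : ξ0 t = a t := by simp [hξ0, Pi.single_apply, ht]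
            rw [hv, if_neg ht, mul_one]
        calc ∏ t, (a t)! = ∏ t, ((ξ0 t)! * (if t = i then a i * (a i - 1) else 1)) :=
              Finset.prod_congr rfl (fun t _ => hpt t)
          _ = (∏ t, (ξ0 t)!) * ∏ t, (if t = i then a i * (a i - 1) else 1) :=
              Finset.prod_mul_distrib
          _ = (∏ t, (ξ0 t)!) * (a i * (a i - 1)) := by
              rw [Finset.prod_ite_eq' univ i (fun _ => a i * (a i - 1)), if_pos (mem_univ i)]
      rw [hprod, if_pos rfl, mul_assoc, mul_comm (a i * (a i - 1)), ← mul_assoc, hspec]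
    · have h1i : 1 ≤ a i := by have := hle i; simp [Pi.single_apply, hij] at this; omega
      have h1j : 1 ≤ a j := by
        have := hle j; simp [Pi.single_apply, Ne.symm hij] at this; omega
      have hprod : ∏ t, (a t)! = (∏ t, (ξ0 t)!) * (a i * a j) := by
        have hpt : ∀ t, (a t)! =
            (ξ0 t)! * ((if t = i then a i else 1) * (if t = j then a j else 1)) := by
          intro t
          by_cases hti : t = i
          · subst hti
            have hv : ξ0 t = a t - 1 := by simp [hξ0, Pi.single_apply, hij]
            rw [hv, if_pos rfl, if_neg hij, mul_one,
                ← Nat.mul_factorial_pred (by omega : a t ≠ 0)]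
            ring
          · by_cases htj : t = j
            · subst htj
              have hv : ξ0 t = a t - 1 := by simp [hξ0, Pi.single_apply, hti]
              rw [hv, if_neg hti, if_pos rfl, one_mul,
                  ← Nat.mul_factorial_pred (by omega : a t ≠ 0)]
              ring
            · have hv : ξ0 t = a t := by simp [hξ0, Pi.single_apply, hti, htj]
              rw [hv, if_neg hti, if_neg htj, mul_one, mul_one]
        calc ∏ t, (a t)!
            = ∏ t, ((ξ0 t)! * ((if t = i then a i else 1) * (if t = j then a j else 1))) :=
              Finset.prod_congr rfl (fun t _ => hpt t)
          _ = (∏ t, (ξ0 t)!) *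
              ((∏ t, (if t = i then a i else 1)) * ∏ t, (if t = j then a j else 1)) := by
              rw [Finset.prod_mul_distrib, Finset.prod_mul_distrib]
          _ = (∏ t, (ξ0 t)!) * (a i * a j) := by
              rw [Finset.prod_ite_eq' univ i (fun _ => a i), if_pos (mem_univ i),
                  Finset.prod_ite_eq' univ j (fun _ => a j), if_pos (mem_univ j)]
      rw [hprod, if_neg hij, Nat.sub_zero, mul_assoc, mul_comm (a i * a j), ← mul_assoc, hspec]
  · have hz : (∑ ξ ∈ piAntidiag (univ : Finset σ) s,
        if ξ + Pi.single i 1 + Pi.single j 1 = a then Nat.multinomial univ ξ else 0) = 0 := by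
      apply Finset.sum_eq_zero
      intro ξ _
      rw [if_neg]
      intro h
      exact hle (by rw [← h, add_assoc]; exact le_add_self)
    rw [hz, mul_zero]
    rw [Pi.le_def] at hle
    push_neg at hle
    obtain ⟨t, ht⟩ := hle
    simp only [Pi.add_apply, Pi.single_apply] at ht
    by_cases hij : i = j
    · subst hij
      rw [if_pos rfl]
      by_cases hti : t = i
      · subst hti
        have : a t ≤ 1 := by simp at ht; omega
        have : a t * (a t - 1) = 0 := by
          rcases Nat.lt_or_ge (a t) 1 with h | h
          · simp [Nat.lt_one_iff.mp h]
          · have : a t = 1 := le_antisymm ‹a t ≤ 1› h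
            simp [this]
        rw [this, mul_zero]
      · simp [hti] at ht
    · rw [if_neg hij, Nat.sub_zero]
      by_cases hti : t = i
      · subst hti
        simp [hij] at ht
        rw [ht, zero_mul, mul_zero]
      · by_cases htj : t = j
        · subst htj
          simp [hti] at ht
          rw [ht, mul_zero, mul_zero]
        · simp [hti, htj] at ht
end

variable {n m : ℕ}

noncomputable def FF (a : Fin n → ℕ) (b : Fin m → ℕ) : (Fin n ⊕ Fin m) →₀ ℕ :=
  Finsupp.equivFunOnFinite.symm (Sum.elim a b)

@[simp] lemma FF_apply (a : Fin n → ℕ) (b : Fin m → ℕ) (v : Fin n ⊕ Fin m) :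
    FF a b v = Sum.elim a b v := rfl

lemma FF_inj {a a' : Fin n → ℕ} {b b' : Fin m → ℕ} (h : FF a b = FF a' b') :
    a = a' ∧ b = b' := by
  constructor
  · funext i; exact congrArg (fun f => f (Sum.inl i)) h
  · funext k; exact congrArg (fun f => f (Sum.inr k)) h

lemma monomial_FF (a : Fin n → ℕ) (b : Fin m → ℕ) :
    (monomial (FF a b) (1 : ℝ)) =
      (∏ i, X (Sum.inl i) ^ a i) * ∏ k, (X (Sum.inr k) : MvPolynomial (Fin n ⊕ Fin m) ℝ) ^ b k := by
  rw [← prod_X_pow_eq_monomial]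
  rw [Finset.prod_subset (Finset.subset_univ (FF a b).support)
    (by intro x _ hx; rw [Finsupp.notMem_support_iff.mp hx, pow_zero])]
  rw [Fintype.prod_sum_type]
  rfl

lemma expansion (s r : ℕ) (G : Fin n → Fin n → Fin m → Fin m → ℝ) :
    biQuadPoly G * (∑ i : Fin n, X (Sum.inl i)) ^ s * (∑ j : Fin m, X (Sum.inr j)) ^ r
    = ∑ i, ∑ j, ∑ k, ∑ l, ∑ ξ ∈ piAntidiag (univ : Finset (Fin n)) s,
        ∑ ζ ∈ piAntidiag (univ : Finset (Fin m)) r,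
        monomial (FF (ξ + Pi.single i 1 + Pi.single j 1) (ζ + Pi.single k 1 + Pi.single l 1))
          (G i j k l * Nat.multinomial univ ξ * Nat.multinomial univ ζ) := by
  have e1 : ((∑ i : Fin n, X (Sum.inl i)) : MvPolynomial (Fin n ⊕ Fin m) ℝ) ^ s
      = ∑ ξ ∈ piAntidiag (univ : Finset (Fin n)) s,
        (Nat.multinomial univ ξ : MvPolynomial (Fin n ⊕ Fin m) ℝ) * ∏ i, X (Sum.inl i) ^ ξ i := by
    rw [Finset.sum_pow_eq_sum_piAntidiag]
  have e2 : ((∑ j : Fin m, X (Sum.inr j)) : MvPolynomial (Fin n ⊕ Fin m) ℝ) ^ r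
      = ∑ ζ ∈ piAntidiag (univ : Finset (Fin m)) r,
        (Nat.multinomial univ ζ : MvPolynomial (Fin n ⊕ Fin m) ℝ) * ∏ k, X (Sum.inr k) ^ ζ k := by
    rw [Finset.sum_pow_eq_sum_piAntidiag]
  rw [biQuadPoly]
  simp only [Finset.sum_mul]
  refine Finset.sum_congr rfl fun i _ => Finset.sum_congr rfl fun j _ =>
    Finset.sum_congr rfl fun k _ => Finset.sum_congr rfl fun l _ => ?_
  rw [e1, e2, Finset.mul_sum]
  conv_rhs => rw [Finset.sum_comm]
  refine Finset.sum_congr rfl fun ζ _ => ?_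
  rw [Finset.mul_sum, Finset.sum_mul]
  refine Finset.sum_congr rfl fun ξ _ => ?_
  have hξ : (∏ t, X (Sum.inl t) ^ ξ t : MvPolynomial (Fin n ⊕ Fin m) ℝ) =
      monomial (FF ξ 0) 1 := by
    rw [monomial_FF]; simp
  have hζ : (∏ u, X (Sum.inr u) ^ ζ u : MvPolynomial (Fin n ⊕ Fin m) ℝ) =
      monomial (FF 0 ζ) 1 := by
    rw [monomial_FF]; simp
  have hc : ∀ (q : ℕ), ((q : MvPolynomial (Fin n ⊕ Fin m) ℝ)) = C (q : ℝ) := by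
    intro q; simp
  rw [hξ, hζ, hc, hc]
  simp only [C_apply, X, monomial_mul]
  have hexp : ∀ (ν ν' : (Fin n ⊕ Fin m) →₀ ℕ) (c c' : ℝ), ν = ν' → c = c' →
      (monomial ν c : MvPolynomial (Fin n ⊕ Fin m) ℝ) = monomial ν' c' := by
    rintro ν ν' c c' rfl rfl; rfl
  apply hexp
  · refine Finsupp.ext fun v => ?_
    rcases v with t | u <;>
      simp [Finsupp.single_apply, Pi.single_apply, Sum.inl.injEq, Sum.inr.injEq, eq_comm] <;> omega
  · ring

lemma coeff_P (s r : ℕ) (G : Fin n → Fin n → Fin m → Fin m → ℝ)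
    (a : Fin n → ℕ) (b : Fin m → ℕ) :
    coeff (FF a b) (biQuadPoly G * (∑ i : Fin n, X (Sum.inl i)) ^ s *
        (∑ j : Fin m, X (Sum.inr j)) ^ r)
    = ∑ i, ∑ j, ∑ k, ∑ l, G i j k l *
        ((∑ ξ ∈ piAntidiag (univ : Finset (Fin n)) s,
          if ξ + Pi.single i 1 + Pi.single j 1 = a then Nat.multinomial univ ξ else 0 : ℕ) : ℝ) *
        ((∑ ζ ∈ piAntidiag (univ : Finset (Fin m)) r,
          if ζ + Pi.single k 1 + Pi.single l 1 = b then Nat.multinomial univ ζ else 0 : ℕ) : ℝ) := by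
  rw [expansion]
  simp only [coeff_sum]
  refine Finset.sum_congr rfl fun i _ => Finset.sum_congr rfl fun j _ =>
    Finset.sum_congr rfl fun k _ => Finset.sum_congr rfl fun l _ => ?_
  rw [Nat.cast_sum, Nat.cast_sum, mul_assoc, Finset.sum_mul_sum, Finset.mul_sum]
  refine Finset.sum_congr rfl fun ξ _ => ?_
  rw [Finset.mul_sum]
  refine Finset.sum_congr rfl fun ζ _ => ?_
  rw [coeff_monomial]
  by_cases h1 : ξ + Pi.single i 1 + Pi.single j 1 = a
  · by_cases h2 : ζ + Pi.single k 1 + Pi.single l 1 = b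
    · subst h1; subst h2
      rw [if_pos rfl, if_pos rfl, if_pos rfl]
      push_cast; ring
    · rw [if_neg (fun h => h2 (FF_inj h).2), if_neg h2]; simp
  · rw [if_neg (fun h => h1 (FF_inj h).1), if_neg h1]; simp

lemma main_id (s r : ℕ) (G : Fin n → Fin n → Fin m → Fin m → ℝ)
    (a : Fin n → ℕ) (b : Fin m → ℕ)
    (ha : ∑ i, a i = s + 2) (hb : ∑ k, b k = r + 2) :
    ((∏ i, (a i)! : ℕ) : ℝ) * ((∏ k, (b k)! : ℕ) : ℝ) *
      coeff (FF a b) (biQuadPoly G * (∑ i : Fin n, X (Sum.inl i)) ^ s *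
        (∑ j : Fin m, X (Sum.inr j)) ^ r)
    = (s ! : ℝ) * (r ! : ℝ) * ∑ i, ∑ j, ∑ k, ∑ l, G i j k l *
        ((a i * (a j - if i = j then 1 else 0) : ℕ) : ℝ) *
        ((b k * (b l - if k = l then 1 else 0) : ℕ) : ℝ) := by
  rw [coeff_P]
  simp only [Finset.mul_sum]
  refine Finset.sum_congr rfl fun i _ => Finset.sum_congr rfl fun j _ =>
    Finset.sum_congr rfl fun k _ => Finset.sum_congr rfl fun l _ => ?_
  have h1 : ((∏ i, (a i)! : ℕ) : ℝ) *
      ((∑ ξ ∈ piAntidiag (univ : Finset (Fin n)) s,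
        if ξ + Pi.single i 1 + Pi.single j 1 = a then Nat.multinomial univ ξ else 0 : ℕ) : ℝ)
      = (s ! : ℝ) * ((a i * (a j - if i = j then 1 else 0) : ℕ) : ℝ) := by
    rw [← Nat.cast_mul, nat_key s i j a ha, Nat.cast_mul]
  have h2 : ((∏ k, (b k)! : ℕ) : ℝ) *
      ((∑ ζ ∈ piAntidiag (univ : Finset (Fin m)) r,
        if ζ + Pi.single k 1 + Pi.single l 1 = b then Nat.multinomial univ ζ else 0 : ℕ) : ℝ)
      = (r ! : ℝ) * ((b k * (b l - if k = l then 1 else 0) : ℕ) : ℝ) := by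
    rw [← Nat.cast_mul, nat_key r k l b hb, Nat.cast_mul]
  calc ((∏ i, (a i)! : ℕ) : ℝ) * ((∏ k, (b k)! : ℕ) : ℝ) *
        (G i j k l *
          ((∑ ξ ∈ piAntidiag (univ : Finset (Fin n)) s,
            if ξ + Pi.single i 1 + Pi.single j 1 = a then Nat.multinomial univ ξ else 0 : ℕ) : ℝ) *
          ((∑ ζ ∈ piAntidiag (univ : Finset (Fin m)) r,
            if ζ + Pi.single k 1 + Pi.single l 1 = b then Nat.multinomial univ ζ else 0 : ℕ) : ℝ))
      = G i j k l *
          (((∏ i, (a i)! : ℕ) : ℝ) *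
            ((∑ ξ ∈ piAntidiag (univ : Finset (Fin n)) s,
              if ξ + Pi.single i 1 + Pi.single j 1 = a then Nat.multinomial univ ξ else 0 : ℕ) : ℝ)) *
          (((∏ k, (b k)! : ℕ) : ℝ) *
            ((∑ ζ ∈ piAntidiag (univ : Finset (Fin m)) r,
              if ζ + Pi.single k 1 + Pi.single l 1 = b then Nat.multinomial univ ζ else 0 : ℕ) : ℝ)) := by
        ring
    _ = G i j k l * ((s ! : ℝ) * ((a i * (a j - if i = j then 1 else 0) : ℕ) : ℝ)) *
          ((r ! : ℝ) * ((b k * (b l - if k = l then 1 else 0) : ℕ) : ℝ)) := by rw [h1, h2]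
    _ = (s ! : ℝ) * (r ! : ℝ) * (G i j k l *
          ((a i * (a j - if i = j then 1 else 0) : ℕ) : ℝ) *
          ((b k * (b l - if k = l then 1 else 0) : ℕ) : ℝ)) := by ring

lemma cast_fact {σ : Type*} [DecidableEq σ] (a : σ → ℕ) (i j : σ) :
    ((a i * (a j - if i = j then 1 else 0) : ℕ) : ℝ)
    = (a i : ℝ) * (a j : ℝ) - (if i = j then (a i : ℝ) else 0) := by
  by_cases hij : i = j
  · subst hij
    rcases Nat.eq_zero_or_pos (a i) with h | h
    · simp [h]
    · rw [if_pos rfl, if_pos rfl, Nat.cast_mul, Nat.cast_sub h]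
      push_cast; ring
  · simp [hij]

lemma Etilde (g : Fin n → Fin n → Fin m → Fin m → ℝ) (x : Fin n → ℝ) (y : Fin m → ℝ) :
    ∑ i, ∑ j, ∑ k, ∑ l, g i j k l * ((x i * x j - if i = j then x i else 0))
        * ((y k * y l - if k = l then y k else 0))
    = (∑ i, ∑ j, ∑ k, ∑ l, g i j k l * x i * x j * y k * y l)
      - (∑ i, x i * ∑ k, ∑ l, g i i k l * y k * y l)
      - (∑ k, y k * ∑ i, ∑ j, g i j k k * x i * x j)
      + ∑ i, ∑ k, g i i k k * x i * y k := by
  simp only [sub_mul, mul_sub, mul_ite, ite_mul, mul_zero, zero_mul,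
    Finset.sum_sub_distrib, Finset.sum_ite_irrel, Finset.sum_const_zero,
    Finset.sum_ite_eq, Finset.sum_ite_eq', Finset.mem_univ, if_true, Finset.mul_sum]
  have hA : (∑ i : Fin n, ∑ j : Fin n, ∑ k : Fin m, ∑ l : Fin m,
        g i j k l * (x i * x j) * (y k * y l))
      = ∑ i : Fin n, ∑ j : Fin n, ∑ k : Fin m, ∑ l : Fin m, g i j k l * x i * x j * y k * y l := by
    refine Finset.sum_congr rfl fun i _ => Finset.sum_congr rfl fun j _ =>
      Finset.sum_congr rfl fun k _ => Finset.sum_congr rfl fun l _ => by ring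
  have hB : (∑ i : Fin n, ∑ k : Fin m, ∑ l : Fin m, g i i k l * x i * (y k * y l))
      = ∑ i : Fin n, ∑ k : Fin m, ∑ l : Fin m, x i * (g i i k l * y k * y l) := by
    refine Finset.sum_congr rfl fun i _ => Finset.sum_congr rfl fun k _ =>
      Finset.sum_congr rfl fun l _ => by ring
  have hC : (∑ i : Fin n, ∑ j : Fin n, ∑ k : Fin m, g i j k k * (x i * x j) * y k)
      = ∑ k : Fin m, ∑ i : Fin n, ∑ j : Fin n, y k * (g i j k k * x i * x j) := by
    calc (∑ i : Fin n, ∑ j : Fin n, ∑ k : Fin m, g i j k k * (x i * x j) * y k)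
        = ∑ i : Fin n, ∑ k : Fin m, ∑ j : Fin n, g i j k k * (x i * x j) * y k :=
          Finset.sum_congr rfl fun i _ => Finset.sum_comm ..
      _ = ∑ k : Fin m, ∑ i : Fin n, ∑ j : Fin n, g i j k k * (x i * x j) * y k :=
          Finset.sum_comm ..
      _ = ∑ k : Fin m, ∑ i : Fin n, ∑ j : Fin n, y k * (g i j k k * x i * x j) :=
          Finset.sum_congr rfl fun k _ => Finset.sum_congr rfl fun i _ =>
            Finset.sum_congr rfl fun j _ => by ring
  rw [hA, hB, hC]
  ring

lemma cast_sum_eq (G : Fin n → Fin n → Fin m → Fin m → ℝ) (a : Fin n → ℕ) (b : Fin m → ℕ) :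
    (∑ i, ∑ j, ∑ k, ∑ l, G i j k l *
        ((a i * (a j - if i = j then 1 else 0) : ℕ) : ℝ) *
        ((b k * (b l - if k = l then 1 else 0) : ℕ) : ℝ))
    = ∑ i, ∑ j, ∑ k, ∑ l, G i j k l *
        ((a i : ℝ) * (a j : ℝ) - if i = j then (a i : ℝ) else 0) *
        ((b k : ℝ) * (b l : ℝ) - if k = l then (b k : ℝ) else 0) := by
  refine Finset.sum_congr rfl fun i _ => Finset.sum_congr rfl fun j _ =>
    Finset.sum_congr rfl fun k _ => Finset.sum_congr rfl fun l _ => ?_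
  rw [cast_fact a i j, cast_fact b k l]


/-- **polyhedral representation of `C_{n,m}^{s,r}`.** A partially symmetric
tensor `G` lies in `C_{n,m}^{s,r}` (i.e. `p_G(x,y)·(Σ_i x_i)^s·(Σ_j y_j)^r` has no negative
coefficients) if and only if finitely many linear inequalities, indexed by
`ξ ∈ I(n,s+2)` and `ζ ∈ I(m,r+2)`, hold. -/
theorem coneC_polyhedral_representation (n m : ℕ) (hn : 0 < n) (hm : 0 < m) (s r : ℕ)
    (G : Fin n → Fin n → Fin m → Fin m → ℝ)
    (hsym : ∀ i j k l, G i j k l = G j i k l ∧ G j i k l = G j i l k) :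
    (∀ μ : (Fin n ⊕ Fin m) →₀ ℕ,
      0 ≤ (biQuadPoly G * (∑ i : Fin n, X (Sum.inl i)) ^ s *
        (∑ j : Fin m, X (Sum.inr j)) ^ r).coeff μ) ↔
    (∀ ξ ∈ Finset.Nat.antidiagonalTuple n (s + 2),
     ∀ ζ ∈ Finset.Nat.antidiagonalTuple m (r + 2),
      0 ≤ (∑ i, ∑ j, ∑ k, ∑ l, G i j k l * (ξ i : ℝ) * (ξ j : ℝ) * (ζ k : ℝ) * (ζ l : ℝ))
          - (∑ i, (ξ i : ℝ) * ∑ k, ∑ l, G i i k l * (ζ k : ℝ) * (ζ l : ℝ))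
          - (∑ k, (ζ k : ℝ) * ∑ i, ∑ j, G i j k k * (ξ i : ℝ) * (ξ j : ℝ))
          + ∑ i, ∑ k, G i i k k * (ξ i : ℝ) * (ζ k : ℝ)) := by
  have hEt : ∀ (a : Fin n → ℕ) (b : Fin m → ℕ),
      (∑ i, ∑ j, ∑ k, ∑ l, G i j k l *
        ((a i * (a j - if i = j then 1 else 0) : ℕ) : ℝ) *
        ((b k * (b l - if k = l then 1 else 0) : ℕ) : ℝ))
      = (∑ i, ∑ j, ∑ k, ∑ l, G i j k l * (a i : ℝ) * (a j : ℝ) * (b k : ℝ) * (b l : ℝ))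
          - (∑ i, (a i : ℝ) * ∑ k, ∑ l, G i i k l * (b k : ℝ) * (b l : ℝ))
          - (∑ k, (b k : ℝ) * ∑ i, ∑ j, G i j k k * (a i : ℝ) * (a j : ℝ))
          + ∑ i, ∑ k, G i i k k * (a i : ℝ) * (b k : ℝ) := by
    intro a b
    rw [cast_sum_eq]
    exact Etilde G (fun i => (a i : ℝ)) (fun k => (b k : ℝ))
  constructor
  · intro h ξ hξ ζ hζ
    have ha : ∑ i, ξ i = s + 2 := Finset.Nat.mem_antidiagonalTuple.mp hξ
    have hb : ∑ k, ζ k = r + 2 := Finset.Nat.mem_antidiagonalTuple.mp hζ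
    have hkey := main_id s r G ξ ζ ha hb
    have h0 := h (FF ξ ζ)
    have hA : (0:ℝ) < ((∏ i, (ξ i)! : ℕ) : ℝ) :=
      Nat.cast_pos.mpr (Finset.prod_pos fun _ _ => Nat.factorial_pos _)
    have hB : (0:ℝ) < ((∏ k, (ζ k)! : ℕ) : ℝ) :=
      Nat.cast_pos.mpr (Finset.prod_pos fun _ _ => Nat.factorial_pos _)
    have h1 : (0:ℝ) ≤ (s ! : ℝ) * (r ! : ℝ) * ∑ i, ∑ j, ∑ k, ∑ l, G i j k l *
        ((ξ i * (ξ j - if i = j then 1 else 0) : ℕ) : ℝ) *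
        ((ζ k * (ζ l - if k = l then 1 else 0) : ℕ) : ℝ) := by
      rw [← hkey, mul_assoc]
      exact mul_nonneg hA.le (mul_nonneg hB.le h0)
    have hpos : (0:ℝ) < (s ! : ℝ) * (r ! : ℝ) := by positivity
    rw [mul_assoc] at h1
    have h2 := (mul_nonneg_iff_of_pos_left (Nat.cast_pos.mpr (Nat.factorial_pos s))).mp h1
    have h3 := (mul_nonneg_iff_of_pos_left (Nat.cast_pos.mpr (Nat.factorial_pos r))).mp h2
    rwa [hEt ξ ζ] at h3
  · intro h μ
    set a : Fin n → ℕ := fun i => μ (Sum.inl i) with hadef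
    set b : Fin m → ℕ := fun k => μ (Sum.inr k) with hbdef
    have hμ : μ = FF a b := by
      refine Finsupp.ext fun v => ?_
      rcases v with t | u <;> rfl
    by_cases hd : (∑ i, a i = s + 2) ∧ (∑ k, b k = r + 2)
    · obtain ⟨ha, hb⟩ := hd
      have hE0 := h a (Finset.Nat.mem_antidiagonalTuple.mpr ha) b
        (Finset.Nat.mem_antidiagonalTuple.mpr hb)
      have h2 : (0:ℝ) ≤ ∑ i, ∑ j, ∑ k, ∑ l, G i j k l *
          ((a i * (a j - if i = j then 1 else 0) : ℕ) : ℝ) *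
          ((b k * (b l - if k = l then 1 else 0) : ℕ) : ℝ) := by
        rw [hEt a b]; exact hE0
      have hkey := main_id s r G a b ha hb
      have hA : (0:ℝ) < ((∏ i, (a i)! : ℕ) : ℝ) :=
        Nat.cast_pos.mpr (Finset.prod_pos fun _ _ => Nat.factorial_pos _)
      have hB : (0:ℝ) < ((∏ k, (b k)! : ℕ) : ℝ) :=
        Nat.cast_pos.mpr (Finset.prod_pos fun _ _ => Nat.factorial_pos _)
      rw [hμ]
      have h1 : (0:ℝ) ≤ ((∏ i, (a i)! : ℕ) : ℝ) * (((∏ k, (b k)! : ℕ) : ℝ) *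
          coeff (FF a b) (biQuadPoly G * (∑ i : Fin n, X (Sum.inl i)) ^ s *
            (∑ j : Fin m, X (Sum.inr j)) ^ r)) := by
        rw [← mul_assoc, hkey]
        exact mul_nonneg (by positivity) h2
      exact (mul_nonneg_iff_of_pos_left hB).mp ((mul_nonneg_iff_of_pos_left hA).mp h1)
    · rw [hμ, expansion]
      simp only [coeff_sum, coeff_monomial]
      refine le_of_eq (Finset.sum_eq_zero fun i _ => Finset.sum_eq_zero fun j _ =>
        Finset.sum_eq_zero fun k _ => Finset.sum_eq_zero fun l _ =>
        Finset.sum_eq_zero fun ξ hξ => Finset.sum_eq_zero fun ζ hζ => ?_).symm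
      rw [if_neg]
      intro hFF
      obtain ⟨h1, h2⟩ := FF_inj hFF
      apply hd
      have hξs : ∑ t, ξ t = s := ((Finset.mem_piAntidiag).mp hξ).1
      have hζr : ∑ t, ζ t = r := ((Finset.mem_piAntidiag).mp hζ).1
      constructor
      · rw [← h1]
        simp [Finset.sum_add_distrib, Pi.single_apply, hξs]
      · rw [← h2]
        simp [Finset.sum_add_distrib, Pi.single_apply, hζr]
end

section
/- Let A = (a_{ijkl}) be a partially symmetric (2,2)-th order n×n×m×m tensor and let s, r be nonnegative integers. Then p_C^{(s,r)} = sup{λ ∈ ℝ : A − λE ∈ C_{n,m}^{s,r}} satisfies p_C^{(s,r)} = [(s+2)(r+2)/((s+1)(r+1))] · min{ p̄_A(x,y) : x ∈ Δ_n(s), y ∈ Δ_m(r) }, where p̄_A(x,y) = p_A(x,y) − (1/(s+2)) Σ_{i=1}^n x_i (Σ_{k,l=1}^m a_{iikl} y_k y_l) − (1/(r+2)) Σ_{k=1}^m y_k (Σ_{i,j=1}^n a_{ijkk} x_i x_j) + (1/((s+2)(r+2))) Σ_{i=1}^n Σ_{k=1}^m a_{iikk} x_i y_k; in particular the supremum defining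 p_C^{(s,r)} is attained. -/
open MvPolynomial

/-- The modified bi-quadratic form `p̄_A` appearing in Theorem 4 of the paper. -/
noncomputable def pbar {n m : ℕ} (A : Fin n → Fin n → Fin m → Fin m → ℝ) (s r : ℕ)
    (x : Fin n → ℝ) (y : Fin m → ℝ) : ℝ :=
  (∑ i, ∑ j, ∑ k, ∑ l, A i j k l * x i * x j * y k * y l)
    - (1 / ((s : ℝ) + 2)) * ∑ i, x i * ∑ k, ∑ l, A i i k l * y k * y l
    - (1 / ((r : ℝ) + 2)) * ∑ k, y k * ∑ i, ∑ j, A i j k k * x i * x j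
    + (1 / (((s : ℝ) + 2) * ((r : ℝ) + 2))) * ∑ i, ∑ k, A i i k k * x i * y k

namespace PCAux

open Finset

theorem prod_X_pow_univ {n : ℕ} (e : Fin n →₀ ℕ) :
    (∏ i : Fin n, (X i : MvPolynomial (Fin n) ℝ) ^ e i) = monomial e 1 := by
  rw [← prod_X_pow_eq_monomial]
  refine (Finset.prod_subset (Finset.subset_univ _) ?_).symm
  intro i _ hi
  rw [Finsupp.notMem_support_iff.mp hi, pow_zero]

theorem coeff_sum_X_pow (n s : ℕ) (d : Fin n →₀ ℕ) :
    coeff d ((∑ i : Fin n, X i : MvPolynomial (Fin n) ℝ) ^ s) =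
      if ∑ i, d i = s then (Nat.multinomial Finset.univ ⇑d : ℝ) else 0 := by
  rw [Finset.sum_pow_eq_sum_piAntidiag]
  have hmon : ∀ k : Fin n → ℕ, (↑(Nat.multinomial Finset.univ k) * ∏ i : Fin n, (X i : MvPolynomial (Fin n) ℝ) ^ k i) =
      monomial (Finsupp.equivFunOnFinite.symm k) ((Nat.multinomial Finset.univ k : ℝ)) := by
    intro k
    have h := prod_X_pow_univ (Finsupp.equivFunOnFinite.symm k)
    simp only [Finsupp.coe_equivFunOnFinite_symm] at h
    rw [h, ← C_eq_coe_nat, C_mul_monomial, mul_one]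
  simp_rw [hmon, coeff_sum, coeff_monomial, Equiv.symm_apply_eq]
  rw [Finset.sum_ite_eq' (Finset.univ.piAntidiag s) (Finsupp.equivFunOnFinite d)]
  simp [Finset.mem_piAntidiag]
  rfl

/-- The coefficient of `X^d` in `X i * X j * (∑ X)^s`. -/
theorem ccoeff_eq (n s : ℕ) (i j : Fin n) (d : Fin n →₀ ℕ) :
    coeff d ((X i * X j * (∑ t : Fin n, X t) ^ s : MvPolynomial (Fin n) ℝ)) =
      if ∑ t, d t = s + 2 then
        ((s.factorial : ℝ) / ∏ t, ((d t).factorial : ℝ)) * (d i : ℝ) *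
          ((d j : ℝ) - if i = j then 1 else 0)
      else 0 := by
  classical
  have hre : (X i * X j * (∑ t : Fin n, X t) ^ s : MvPolynomial (Fin n) ℝ)
      = (∑ t : Fin n, X t) ^ s * X i * X j := by ring
  rw [hre, coeff_mul_X', coeff_mul_X']
  by_cases hj : d j = 0
  · rw [if_neg (by simp [Finsupp.mem_support_iff, hj])]
    by_cases hsum : ∑ t, d t = s + 2
    · rw [if_pos hsum]
      rcases eq_or_ne i j with rfl | hij
      · simp [hj]
      · simp [hj, hij]
    · rw [if_neg hsum]
  · have hj1 : 1 ≤ d j := Nat.one_le_iff_ne_zero.mpr hj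
    rw [if_pos (by simp [Finsupp.mem_support_iff, hj])]
    set d1 := d - Finsupp.single j 1 with hd1
    have hD1 : d = d1 + Finsupp.single j 1 := by
      rw [hd1, tsub_add_cancel_of_le (Finsupp.single_le_iff.mpr hj1)]
    by_cases hi : d1 i = 0
    · rw [if_neg (by simp [Finsupp.mem_support_iff, hi])]
      have hd1i : d1 i + (Finsupp.single j 1) i = d i := by rw [hD1]; simp
      by_cases hsum : ∑ t, d t = s + 2
      · rw [if_pos hsum]
        rcases eq_or_ne i j with rfl | hij
        · have : d i = 1 := by
            rw [Finsupp.single_apply, if_pos rfl, hi] at hd1i; omega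
          simp [this]
        · have : d i = 0 := by
            rw [Finsupp.single_apply, if_neg (Ne.symm hij), hi] at hd1i; omega
          simp [this]
      · rw [if_neg hsum]
    · have hi1 : 1 ≤ d1 i := Nat.one_le_iff_ne_zero.mpr hi
      rw [if_pos (by simp [Finsupp.mem_support_iff, hi])]
      set d2 := d1 - Finsupp.single i 1 with hd2
      have hD2 : d1 = d2 + Finsupp.single i 1 := by
        rw [hd2, tsub_add_cancel_of_le (Finsupp.single_le_iff.mpr hi1)]
      have hD : d = d2 + Finsupp.single i 1 + Finsupp.single j 1 := by rw [hD1, hD2]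
      have hpt : ∀ t, d t = d2 t + (if i = t then 1 else 0) + (if j = t then 1 else 0) := by
        intro t
        rw [hD, Finsupp.add_apply, Finsupp.add_apply, Finsupp.single_apply, Finsupp.single_apply]
      rw [coeff_sum_X_pow]
      have hsum2 : ∑ t, d t = (∑ t, d2 t) + 2 := by
        rw [Finset.sum_congr rfl fun t _ => hpt t, Finset.sum_add_distrib, Finset.sum_add_distrib]
        simp [Finset.sum_ite_eq]
      by_cases hsum : ∑ t, d t = s + 2
      · have hs2 : ∑ t, d2 t = s := by omega
        rw [if_pos hs2, if_pos hsum]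
        have hne : (∏ t, ((d2 t).factorial : ℝ)) ≠ 0 := by positivity
        have hmult : (Nat.multinomial Finset.univ ⇑d2 : ℝ)
            = (s.factorial : ℝ) / ∏ t, ((d2 t).factorial : ℝ) := by
          rw [eq_div_iff hne]
          have h0 : ((∏ t, (d2 t).factorial) * Nat.multinomial Finset.univ ⇑d2 : ℕ)
              = s.factorial := by rw [Nat.multinomial_spec, hs2]
          push_cast [← h0]; ring
        rw [hmult]
        have heq : ∀ t ∈ (Finset.univ.erase j).erase i,
            ((d t).factorial : ℝ) = ((d2 t).factorial : ℝ) := by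
          intro t ht
          have h1 : t ≠ i := Finset.ne_of_mem_erase ht
          have h2 : t ≠ j := Finset.ne_of_mem_erase (Finset.mem_of_mem_erase ht)
          rw [hpt t]; simp [Ne.symm h1, Ne.symm h2]
        rcases eq_or_ne i j with rfl | hij
        · have hdi : d i = d2 i + 2 := by have := hpt i; simp at this; omega
          have hfac : (∏ t, ((d t).factorial : ℝ))
              = (∏ t, ((d2 t).factorial : ℝ)) * ((d i : ℝ) * ((d i : ℝ) - 1)) := by
            rw [← Finset.mul_prod_erase Finset.univ _ (Finset.mem_univ i),
              ← Finset.mul_prod_erase Finset.univ (fun t => ((d2 t).factorial : ℝ))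
                (Finset.mem_univ i)]
            have : ∀ t ∈ Finset.univ.erase i, ((d t).factorial : ℝ) = ((d2 t).factorial : ℝ) := by
              intro t ht
              have h1 : t ≠ i := Finset.ne_of_mem_erase ht
              rw [hpt t]; simp [Ne.symm h1]
            rw [Finset.prod_congr rfl this]
            have hnat : (d i).factorial = d i * (d i - 1) * (d2 i).factorial := by
              rw [hdi]; simp [Nat.factorial]; ring
            rw [hnat]
            push_cast [hdi]
            ring
          rw [hfac, if_pos rfl]
          have hdi0 : (d i : ℝ) ≠ 0 := by
            have : (0:ℕ) < d i := by omega
            exact_mod_cast (Nat.cast_pos (α := ℝ)).mpr this |>.ne'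
          have hdi1' : (d i : ℝ) - 1 ≠ 0 := by
            have : (2:ℝ) ≤ (d i : ℝ) := by exact_mod_cast (by omega : 2 ≤ d i)
            intro h; linarith
          field_simp
        · have hdi : d i = d2 i + 1 := by
            have := hpt i; rw [if_pos rfl, if_neg (Ne.symm hij)] at this; omega
          have hdj : d j = d2 j + 1 := by
            have := hpt j; rw [if_neg hij, if_pos rfl] at this; omega
          have hfac : (∏ t, ((d t).factorial : ℝ))
              = (∏ t, ((d2 t).factorial : ℝ)) * ((d i : ℝ) * (d j : ℝ)) := by
            rw [← Finset.mul_prod_erase Finset.univ _ (Finset.mem_univ j),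
              ← Finset.mul_prod_erase Finset.univ (fun t => ((d2 t).factorial : ℝ))
                (Finset.mem_univ j),
              ← Finset.mul_prod_erase _ _ (Finset.mem_erase.mpr ⟨hij, Finset.mem_univ i⟩),
              ← Finset.mul_prod_erase _ (fun t => ((d2 t).factorial : ℝ))
                (Finset.mem_erase.mpr ⟨hij, Finset.mem_univ i⟩)]
            rw [Finset.prod_congr rfl heq]
            have hfi : (d i).factorial = d i * (d2 i).factorial := by
              rw [hdi]; simp [Nat.factorial_succ]
            have hfj : (d j).factorial = d j * (d2 j).factorial := by
              rw [hdj]; simp [Nat.factorial_succ]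
            rw [hfi, hfj]
            push_cast
            ring
          rw [hfac, if_neg hij]
          have hdi0 : (d i : ℝ) ≠ 0 := by
            have : (0:ℕ) < d i := by omega
            exact_mod_cast (Nat.cast_pos (α := ℝ)).mpr this |>.ne'
          have hdj0 : (d j : ℝ) ≠ 0 := by
            have : (0:ℕ) < d j := by omega
            exact_mod_cast (Nat.cast_pos (α := ℝ)).mpr this |>.ne'
          field_simp
          ring
      · rw [if_neg hsum, if_neg (by omega)]

theorem mapDomain_inl_add_inr {n m : ℕ} (a : Fin n →₀ ℕ) (b : Fin m →₀ ℕ) :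
    Finsupp.mapDomain (Sum.inl : Fin n → Fin n ⊕ Fin m) a
      + Finsupp.mapDomain (Sum.inr : Fin m → Fin n ⊕ Fin m) b
      = Finsupp.sumFinsuppEquivProdFinsupp.symm (a, b) := by
  ext x
  cases x with
  | inl i =>
      rw [Finsupp.add_apply, Finsupp.mapDomain_apply Sum.inl_injective,
        Finsupp.mapDomain_notin_range _ _ (by simp), add_zero,
        Finsupp.sumFinsuppEquivProdFinsupp_symm_inl]
  | inr k =>
      rw [Finsupp.add_apply, Finsupp.mapDomain_apply Sum.inr_injective,
        Finsupp.mapDomain_notin_range _ _ (by simp), zero_add,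
        Finsupp.sumFinsuppEquivProdFinsupp_symm_inr]

theorem coeff_rename_mul_rename {n m : ℕ} (p : MvPolynomial (Fin n) ℝ) (q : MvPolynomial (Fin m) ℝ)
    (μ : (Fin n ⊕ Fin m) →₀ ℕ) :
    coeff μ (rename Sum.inl p * rename Sum.inr q) =
      coeff (Finsupp.sumFinsuppEquivProdFinsupp μ).1 p *
        coeff (Finsupp.sumFinsuppEquivProdFinsupp μ).2 q := by
  induction p using MvPolynomial.induction_on' with
  | add p₁ p₂ hp₁ hp₂ => simp [map_add, add_mul, hp₁, hp₂, coeff_add, add_mul]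
  | monomial a c =>
    induction q using MvPolynomial.induction_on' with
    | add q₁ q₂ hq₁ hq₂ => simp [map_add, mul_add, hq₁, hq₂, coeff_add, mul_add]
    | monomial b e =>
      rw [rename_monomial, rename_monomial, monomial_mul, coeff_monomial, coeff_monomial,
        coeff_monomial, mapDomain_inl_add_inr]
      by_cases h : Finsupp.sumFinsuppEquivProdFinsupp.symm (a, b) = μ
      · have : (a, b) = Finsupp.sumFinsuppEquivProdFinsupp μ := by
          rw [← h, Equiv.apply_symm_apply]
        rw [if_pos h, if_pos, if_pos]
        · exact (congrArg Prod.snd this)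
        · exact (congrArg Prod.fst this)
      · rw [if_neg h]
        by_cases ha : a = (Finsupp.sumFinsuppEquivProdFinsupp μ).1
        · rw [if_pos ha, if_neg, mul_zero]
          intro hb
          apply h
          rw [ha, hb, Prod.mk.eta, Equiv.symm_apply_apply]
        · rw [if_neg ha, zero_mul]

theorem coeff_biQuad {n m : ℕ} (s r : ℕ) (G : Fin n → Fin n → Fin m → Fin m → ℝ)
    (μ : (Fin n ⊕ Fin m) →₀ ℕ) :
    coeff μ (biQuadPoly G * (∑ i : Fin n, X (Sum.inl i)) ^ s *
        (∑ j : Fin m, X (Sum.inr j)) ^ r) =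
      ∑ i, ∑ j, ∑ k, ∑ l, G i j k l *
        coeff (Finsupp.sumFinsuppEquivProdFinsupp μ).1 ((X i * X j * (∑ t : Fin n, X t) ^ s : MvPolynomial (Fin n) ℝ)) *
        coeff (Finsupp.sumFinsuppEquivProdFinsupp μ).2 ((X k * X l * (∑ t : Fin m, X t) ^ r : MvPolynomial (Fin m) ℝ)) := by
  rw [biQuadPoly]
  simp only [Finset.sum_mul, coeff_sum]
  refine Finset.sum_congr rfl fun i _ => Finset.sum_congr rfl fun j _ =>
    Finset.sum_congr rfl fun k _ => Finset.sum_congr rfl fun l _ => ?_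
  have hre : C (G i j k l) * X (Sum.inl i) * X (Sum.inl j) * X (Sum.inr k) * X (Sum.inr l) *
        (∑ i : Fin n, X (Sum.inl i)) ^ s * (∑ j : Fin m, (X (Sum.inr j) : MvPolynomial (Fin n ⊕ Fin m) ℝ)) ^ r
      = C (G i j k l) * (rename Sum.inl ((X i * X j * (∑ t : Fin n, X t) ^ s : MvPolynomial (Fin n) ℝ)) *
          rename Sum.inr ((X k * X l * (∑ t : Fin m, X t) ^ r : MvPolynomial (Fin m) ℝ))) := by
    simp only [map_mul, map_pow, rename_X, map_sum]
    ring
  rw [hre, coeff_C_mul, coeff_rename_mul_rename]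
  ring

theorem key_expand {n m : ℕ} (G : Fin n → Fin n → Fin m → Fin m → ℝ)
    (a : Fin n → ℝ) (b : Fin m → ℝ) :
    ∑ i, ∑ j, ∑ k, ∑ l, G i j k l * (a i * (a j - if i = j then 1 else 0)) *
        (b k * (b l - if k = l then 1 else 0))
      = (∑ i, ∑ j, ∑ k, ∑ l, G i j k l * a i * a j * b k * b l)
        - (∑ i, a i * ∑ k, ∑ l, G i i k l * b k * b l)
        - (∑ k, b k * ∑ i, ∑ j, G i j k k * a i * a j)
        + ∑ i, ∑ k, G i i k k * a i * b k := by
  have h : ∀ i j k l, G i j k l * (a i * (a j - if i = j then 1 else 0)) *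
      (b k * (b l - if k = l then 1 else 0)) =
      G i j k l * a i * a j * b k * b l
      - (if k = l then G i j k l * a i * a j * b k else 0)
      - (if i = j then G i j k l * a i * b k * b l else 0)
      + (if i = j then (if k = l then G i j k l * a i * b k else 0) else 0) := by
    intro i j k l; split_ifs <;> ring
  simp_rw [h, Finset.sum_add_distrib, Finset.sum_sub_distrib, Finset.sum_ite_irrel,
    Finset.sum_const_zero, Finset.sum_ite_eq, Finset.mem_univ, if_true]
  have E3 : (∑ x : Fin n, ∑ x1 : Fin m, ∑ x2 : Fin m, G x x x1 x2 * a x * b x1 * b x2)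
      = ∑ i, a i * ∑ k, ∑ l, G i i k l * b k * b l := by
    refine Finset.sum_congr rfl fun i _ => ?_
    rw [Finset.mul_sum]; refine Finset.sum_congr rfl fun k _ => ?_
    rw [Finset.mul_sum]; refine Finset.sum_congr rfl fun l _ => ?_; ring
  have E2 : (∑ x : Fin n, ∑ x1 : Fin n, ∑ x2 : Fin m, G x x1 x2 x2 * a x * a x1 * b x2)
      = ∑ k, b k * ∑ i, ∑ j, G i j k k * a i * a j := by
    rw [show (∑ x : Fin n, ∑ x1 : Fin n, ∑ x2 : Fin m, G x x1 x2 x2 * a x * a x1 * b x2)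
        = ∑ x : Fin n, ∑ x2 : Fin m, ∑ x1 : Fin n, G x x1 x2 x2 * a x * a x1 * b x2 from
      Finset.sum_congr rfl fun i _ => Finset.sum_comm, Finset.sum_comm]
    refine Finset.sum_congr rfl fun k _ => ?_
    rw [Finset.mul_sum]; refine Finset.sum_congr rfl fun i _ => ?_
    rw [Finset.mul_sum]; refine Finset.sum_congr rfl fun j _ => ?_; ring
  rw [E2, E3]; ring

theorem key_pbar {n m : ℕ} (s r : ℕ) (G : Fin n → Fin n → Fin m → Fin m → ℝ)
    (a : Fin n → ℝ) (b : Fin m → ℝ) :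
    ∑ i, ∑ j, ∑ k, ∑ l, G i j k l * (a i * (a j - if i = j then 1 else 0)) *
        (b k * (b l - if k = l then 1 else 0))
      = ((s : ℝ) + 2) ^ 2 * ((r : ℝ) + 2) ^ 2 *
          pbar G s r (fun i => a i / ((s : ℝ) + 2)) (fun k => b k / ((r : ℝ) + 2)) := by
  have hs0 : ((s : ℝ) + 2) ≠ 0 := by positivity
  have hr0 : ((r : ℝ) + 2) ≠ 0 := by positivity
  rw [key_expand, pbar]
  set cs := ((s : ℝ) + 2)
  set cr := ((r : ℝ) + 2)
  have H1 : cs ^ 2 * cr ^ 2 * (∑ i, ∑ j, ∑ k, ∑ l,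
        G i j k l * (a i / cs) * (a j / cs) * (b k / cr) * (b l / cr))
      = ∑ i, ∑ j, ∑ k, ∑ l, G i j k l * a i * a j * b k * b l := by
    simp only [Finset.mul_sum]
    refine Finset.sum_congr rfl fun i _ => Finset.sum_congr rfl fun j _ =>
      Finset.sum_congr rfl fun k _ => Finset.sum_congr rfl fun l _ => ?_
    field_simp
  have H2 : cs ^ 2 * cr ^ 2 * ((1 / cs) * ∑ i, (a i / cs) * ∑ k, ∑ l,
        G i i k l * (b k / cr) * (b l / cr))
      = ∑ i, a i * ∑ k, ∑ l, G i i k l * b k * b l := by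
    simp only [Finset.mul_sum]
    refine Finset.sum_congr rfl fun i _ => Finset.sum_congr rfl fun k _ =>
      Finset.sum_congr rfl fun l _ => ?_
    field_simp
  have H3 : cs ^ 2 * cr ^ 2 * ((1 / cr) * ∑ k, (b k / cr) * ∑ i, ∑ j,
        G i j k k * (a i / cs) * (a j / cs))
      = ∑ k, b k * ∑ i, ∑ j, G i j k k * a i * a j := by
    simp only [Finset.mul_sum]
    refine Finset.sum_congr rfl fun k _ => Finset.sum_congr rfl fun i _ =>
      Finset.sum_congr rfl fun j _ => ?_
    field_simp
  have H4 : cs ^ 2 * cr ^ 2 * ((1 / (cs * cr)) * ∑ i, ∑ k, G i i k k * (a i / cs) * (b k / cr))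
      = ∑ i, ∑ k, G i i k k * a i * b k := by
    simp only [Finset.mul_sum]
    refine Finset.sum_congr rfl fun i _ => Finset.sum_congr rfl fun k _ => ?_
    field_simp
  rw [mul_add, mul_sub, mul_sub, H1, H2, H3, H4]

theorem pbar_sub_const {n m : ℕ} (s r : ℕ) (A : Fin n → Fin n → Fin m → Fin m → ℝ) (lam : ℝ)
    (x : Fin n → ℝ) (y : Fin m → ℝ) (hx : ∑ i, x i = 1) (hy : ∑ k, y k = 1) :
    pbar (fun i j k l => A i j k l - lam) s r x y
      = pbar A s r x y - lam * (((s : ℝ) + 1) * ((r : ℝ) + 1)) / (((s : ℝ) + 2) * ((r : ℝ) + 2)) := by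
  have hs0 : ((s : ℝ) + 2) ≠ 0 := by positivity
  have hr0 : ((r : ℝ) + 2) ≠ 0 := by positivity
  have c1 : ∑ i, ∑ j, ∑ k, ∑ l, (A i j k l - lam) * x i * x j * y k * y l
      = (∑ i, ∑ j, ∑ k, ∑ l, A i j k l * x i * x j * y k * y l) - lam := by
    have h : ∀ (i j : Fin n) (k l : Fin m), (A i j k l - lam) * x i * x j * y k * y l
        = A i j k l * x i * x j * y k * y l - lam * (x i * (x j * (y k * y l))) := by
      intro i j k l; ring
    simp only [h, Finset.sum_sub_distrib, ← Finset.mul_sum, hy, hx, mul_one]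
  have c2 : ∑ i, x i * ∑ k, ∑ l, (A i i k l - lam) * y k * y l
      = (∑ i, x i * ∑ k, ∑ l, A i i k l * y k * y l) - lam := by
    have h : ∀ (i : Fin n) (k l : Fin m), (A i i k l - lam) * y k * y l
        = A i i k l * y k * y l - lam * (y k * y l) := by intro i k l; ring
    simp only [h, Finset.sum_sub_distrib, ← Finset.mul_sum, hy, mul_one, mul_sub,
      ← Finset.sum_mul, hx, one_mul]
  have c3 : ∑ k, y k * ∑ i, ∑ j, (A i j k k - lam) * x i * x j
      = (∑ k, y k * ∑ i, ∑ j, A i j k k * x i * x j) - lam := by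
    have h : ∀ (i j : Fin n) (k : Fin m), (A i j k k - lam) * x i * x j
        = A i j k k * x i * x j - lam * (x i * x j) := by intro i j k; ring
    simp only [h, Finset.sum_sub_distrib, ← Finset.mul_sum, hx, mul_one, mul_sub,
      ← Finset.sum_mul, hy, one_mul]
  have c4 : ∑ i, ∑ k, (A i i k k - lam) * x i * y k
      = (∑ i, ∑ k, A i i k k * x i * y k) - lam := by
    have h : ∀ (i : Fin n) (k : Fin m), (A i i k k - lam) * x i * y k
        = A i i k k * x i * y k - lam * (x i * y k) := by intro i k; ring
    simp only [h, Finset.sum_sub_distrib, ← Finset.mul_sum, hy, hx, mul_one]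
  rw [pbar, pbar, c1, c2, c3, c4]
  field_simp
  ring

end PCAux

namespace PCAux

theorem grid_point {n : ℕ} (s : ℕ) (d : Fin n →₀ ℕ) (hd : ∑ i, d i = s + 2) :
    (∑ i, ((d i : ℝ) / ((s : ℝ) + 2)) = 1) ∧
    ((fun i => (d i : ℝ) / ((s : ℝ) + 2)) ∈ stdSimplex ℝ (Fin n)) ∧
    (∀ i, ∃ t : ℕ, ((s : ℝ) + 2) * ((d i : ℝ) / ((s : ℝ) + 2)) = t) := by
  have hs0 : ((s : ℝ) + 2) ≠ 0 := by positivity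
  have hc : (∑ i, (d i : ℝ)) = (s : ℝ) + 2 := by
    rw [← Nat.cast_sum, hd]; push_cast; ring
  have hsum : (∑ i, ((d i : ℝ) / ((s : ℝ) + 2)) : ℝ) = 1 := by
    rw [← Finset.sum_div, hc, div_self hs0]
  refine ⟨hsum, ⟨fun i => div_nonneg (Nat.cast_nonneg _) (by positivity), hsum⟩, ?_⟩
  intro i
  exact ⟨d i, by rw [mul_comm, div_mul_cancel₀ _ hs0]⟩

theorem grid_repr {n : ℕ} (s : ℕ) (x : Fin n → ℝ) (hx : x ∈ stdSimplex ℝ (Fin n))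
    (hg : ∀ i, ∃ t : ℕ, ((s : ℝ) + 2) * x i = t) :
    ∃ d : Fin n →₀ ℕ, (∑ i, d i = s + 2) ∧ x = fun i => (d i : ℝ) / ((s : ℝ) + 2) := by
  have hs0 : ((s : ℝ) + 2) ≠ 0 := by positivity
  choose f hf using hg
  refine ⟨Finsupp.equivFunOnFinite.symm f, ?_, ?_⟩
  · have hcast : ((∑ i, f i : ℕ) : ℝ) = ((s + 2 : ℕ) : ℝ) := by
      push_cast
      rw [Finset.sum_congr rfl fun i _ => (hf i).symm, ← Finset.mul_sum, hx.2, mul_one]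
    exact_mod_cast hcast
  · funext i
    have := hf i
    have hxi : x i = (f i : ℝ) / ((s : ℝ) + 2) := by
      rw [eq_div_iff hs0, mul_comm]; exact this
    simpa using hxi

theorem dset_finite (n c : ℕ) : {d : Fin n →₀ ℕ | ∑ i, d i = c}.Finite := by
  have h1 : {f : Fin n → ℕ | ∑ i, f i = c}.Finite := by
    apply Set.Finite.subset (Set.Finite.pi fun _ : Fin n => Set.finite_Iic c)
    intro f hf
    refine Set.mem_pi.mpr fun i _ => Set.mem_Iic.mpr ?_
    calc f i ≤ ∑ j, f j := Finset.single_le_sum (fun j _ => Nat.zero_le _) (Finset.mem_univ i)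
      _ = c := hf
  have h2 : {d : Fin n →₀ ℕ | ∑ i, d i = c}
      = (fun d : Fin n →₀ ℕ => (d : Fin n → ℕ)) ⁻¹' {f | ∑ i, f i = c} := rfl
  rw [h2]
  exact Set.Finite.preimage (Set.injOn_of_injective DFunLike.coe_injective) h1

end PCAux

/-- **Theorem 4.** The value `p_C^{(s,r)} = sup{λ : A − λE ∈ C_{n,m}^{s,r}}`
is attained and equals `((s+2)(r+2))/((s+1)(r+1))` times the minimum of `p̄_A` over the
rational grid `Δ_n(s) × Δ_m(r)`. -/
theorem pC_eq_grid_min (n m : ℕ) (hn : 0 < n) (hm : 0 < m) (s r : ℕ)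
    (A : Fin n → Fin n → Fin m → Fin m → ℝ)
    (hsym : ∀ i j k l, A i j k l = A j i k l ∧ A j i k l = A j i l k) :
    IsGreatest {lam : ℝ | ∀ μ : (Fin n ⊕ Fin m) →₀ ℕ,
        0 ≤ (biQuadPoly (fun i j k l => A i j k l - lam) *
          (∑ i : Fin n, X (Sum.inl i)) ^ s * (∑ j : Fin m, X (Sum.inr j)) ^ r).coeff μ}
      ((((s : ℝ) + 2) * ((r : ℝ) + 2) / (((s : ℝ) + 1) * ((r : ℝ) + 1))) *
        sInf {v : ℝ | ∃ x ∈ stdSimplex ℝ (Fin n), ∃ y ∈ stdSimplex ℝ (Fin m),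
          (∀ i, ∃ t : ℕ, ((s : ℝ) + 2) * x i = t) ∧
          (∀ k, ∃ t : ℕ, ((r : ℝ) + 2) * y k = t) ∧
          v = pbar A s r x y}) := by
  classical
  have hs0 : ((s : ℝ) + 2) ≠ 0 := by positivity
  have hr0 : ((r : ℝ) + 2) ≠ 0 := by positivity
  set V := {v : ℝ | ∃ x ∈ stdSimplex ℝ (Fin n), ∃ y ∈ stdSimplex ℝ (Fin m),
          (∀ i, ∃ t : ℕ, ((s : ℝ) + 2) * x i = t) ∧
          (∀ k, ∃ t : ℕ, ((r : ℝ) + 2) * y k = t) ∧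
          v = pbar A s r x y} with hVdef
  have hVeq : V = (fun p : (Fin n →₀ ℕ) × (Fin m →₀ ℕ) =>
      pbar A s r (fun i => (p.1 i : ℝ) / ((s : ℝ) + 2)) (fun k => (p.2 k : ℝ) / ((r : ℝ) + 2))) ''
        ({d : Fin n →₀ ℕ | ∑ i, d i = s + 2} ×ˢ {e : Fin m →₀ ℕ | ∑ k, e k = r + 2}) := by
    ext v
    constructor
    · rintro ⟨x, hx, y, hy, hgx, hgy, rfl⟩
      obtain ⟨d, hd, rfl⟩ := PCAux.grid_repr s x hx hgx
      obtain ⟨e, he, rfl⟩ := PCAux.grid_repr r y hy hgy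
      exact ⟨(d, e), ⟨hd, he⟩, rfl⟩
    · rintro ⟨⟨d, e⟩, ⟨hd, he⟩, rfl⟩
      exact ⟨_, (PCAux.grid_point s d hd).2.1, _, (PCAux.grid_point r e he).2.1,
        (PCAux.grid_point s d hd).2.2, (PCAux.grid_point r e he).2.2, rfl⟩
  have hVfin : V.Finite := by
    rw [hVeq]
    exact (((PCAux.dset_finite n (s + 2)).prod (PCAux.dset_finite m (r + 2))).image _)
  have hVne : V.Nonempty := by
    rw [hVeq]
    refine ⟨_, ⟨(Finsupp.single ⟨0, hn⟩ (s + 2), Finsupp.single ⟨0, hm⟩ (r + 2)),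
      ⟨?_, ?_⟩, rfl⟩⟩
    · show (∑ x : Fin n, (Finsupp.single (⟨0, hn⟩ : Fin n) (s + 2)) x) = s + 2
      simp only [Finsupp.single_apply]
      rw [Finset.sum_ite_eq]
      simp
    · show (∑ x : Fin m, (Finsupp.single (⟨0, hm⟩ : Fin m) (r + 2)) x) = r + 2
      simp only [Finsupp.single_apply]
      rw [Finset.sum_ite_eq]
      simp
  have hbdd : BddBelow V := hVfin.bddBelow
  have hInfMem : sInf V ∈ V := hVne.csInf_mem hVfin
  -- the key coefficient formula
  have hkey : ∀ (lam : ℝ) (μ : (Fin n ⊕ Fin m) →₀ ℕ),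
      MvPolynomial.coeff μ (biQuadPoly (fun i j k l => A i j k l - lam) *
          (∑ i : Fin n, X (Sum.inl i)) ^ s * (∑ j : Fin m, X (Sum.inr j)) ^ r)
      = if (∑ i, (Finsupp.sumFinsuppEquivProdFinsupp μ).1 i = s + 2) ∧
            (∑ k, (Finsupp.sumFinsuppEquivProdFinsupp μ).2 k = r + 2) then
          ((s.factorial : ℝ) / ∏ t, (((Finsupp.sumFinsuppEquivProdFinsupp μ).1 t).factorial : ℝ)) *
          ((r.factorial : ℝ) / ∏ t, (((Finsupp.sumFinsuppEquivProdFinsupp μ).2 t).factorial : ℝ)) *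
          (((s : ℝ) + 2) ^ 2 * ((r : ℝ) + 2) ^ 2 *
            pbar (fun i j k l => A i j k l - lam) s r
              (fun i => ((Finsupp.sumFinsuppEquivProdFinsupp μ).1 i : ℝ) / ((s : ℝ) + 2))
              (fun k => ((Finsupp.sumFinsuppEquivProdFinsupp μ).2 k : ℝ) / ((r : ℝ) + 2)))
        else 0 := by
    intro lam μ
    rw [PCAux.coeff_biQuad]
    set d := (Finsupp.sumFinsuppEquivProdFinsupp μ).1 with hd
    set e := (Finsupp.sumFinsuppEquivProdFinsupp μ).2 with he
    by_cases h : (∑ i, d i = s + 2) ∧ (∑ k, e k = r + 2)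
    · rw [if_pos h, ← PCAux.key_pbar s r (fun i j k l => A i j k l - lam)
        (fun i => (d i : ℝ)) (fun k => (e k : ℝ))]
      simp only [PCAux.ccoeff_eq, h.1, h.2, if_true, Finset.mul_sum]
      refine Finset.sum_congr rfl fun i _ => Finset.sum_congr rfl fun j _ =>
        Finset.sum_congr rfl fun k _ => Finset.sum_congr rfl fun l _ => ?_
      ring
    · rw [if_neg h]
      by_cases h1 : ∑ i, d i = s + 2
      · have h2 : ¬(∑ k, e k = r + 2) := fun hh => h ⟨h1, hh⟩
        simp [PCAux.ccoeff_eq, h2]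
      · simp [PCAux.ccoeff_eq, h1]
  constructor
  · -- membership
    intro μ
    rw [hkey]
    split_ifs with h
    · obtain ⟨hd, he⟩ := h
      set d := (Finsupp.sumFinsuppEquivProdFinsupp μ).1
      set e := (Finsupp.sumFinsuppEquivProdFinsupp μ).2
      have hx1 := (PCAux.grid_point s d hd).1
      have hy1 := (PCAux.grid_point r e he).1
      rw [PCAux.pbar_sub_const s r A _ _ _ hx1 hy1]
      have hmemV : pbar A s r (fun i => (d i : ℝ) / ((s : ℝ) + 2))
          (fun k => (e k : ℝ) / ((r : ℝ) + 2)) ∈ V := by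
        rw [hVeq]
        exact ⟨(d, e), ⟨hd, he⟩, rfl⟩
      have h1 : sInf V ≤ pbar A s r (fun i => (d i : ℝ) / ((s : ℝ) + 2))
          (fun k => (e k : ℝ) / ((r : ℝ) + 2)) := csInf_le hbdd hmemV
      have h2 : (((s : ℝ) + 2) * ((r : ℝ) + 2) / (((s : ℝ) + 1) * ((r : ℝ) + 1))) * sInf V *
          (((s : ℝ) + 1) * ((r : ℝ) + 1)) / (((s : ℝ) + 2) * ((r : ℝ) + 2)) = sInf V := by
        field_simp
      refine mul_nonneg (mul_nonneg (by positivity) (by positivity)) ?_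
      refine mul_nonneg (by positivity) ?_
      rw [h2]
      linarith
    · exact le_refl 0
  · -- upper bound
    intro lam hlam
    have hInf2 := hInfMem
    rw [hVeq] at hInf2
    obtain ⟨⟨d, e⟩, ⟨hd, he⟩, hF⟩ := hInf2
    rw [← hVeq] at hF
    have hF' : pbar A s r (fun i => (d i : ℝ) / ((s : ℝ) + 2))
        (fun k => (e k : ℝ) / ((r : ℝ) + 2)) = sInf V := hF
    set μ := Finsupp.sumFinsuppEquivProdFinsupp.symm (d, e) with hμdef
    have h0 := hlam μ
    rw [hkey lam μ] at h0
    have hμ : Finsupp.sumFinsuppEquivProdFinsupp μ = (d, e) := Equiv.apply_symm_apply _ _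
    rw [hμ] at h0
    simp only [] at h0
    rw [if_pos ⟨hd, he⟩] at h0
    have hx1 := (PCAux.grid_point s d hd).1
    have hy1 := (PCAux.grid_point r e he).1
    rw [PCAux.pbar_sub_const s r A _ _ _ hx1 hy1] at h0
    set K1 := ((s.factorial : ℝ) / ∏ t, ((d t).factorial : ℝ)) with hK1
    set K2 := ((r.factorial : ℝ) / ∏ t, ((e t).factorial : ℝ)) with hK2
    set W := pbar A s r (fun i => (d i : ℝ) / ((s : ℝ) + 2))
        (fun k => (e k : ℝ) / ((r : ℝ) + 2)) -
        lam * (((s : ℝ) + 1) * ((r : ℝ) + 1)) / (((s : ℝ) + 2) * ((r : ℝ) + 2)) with hW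
    have hKpos : (0 : ℝ) < K1 * K2 * (((s : ℝ) + 2) ^ 2 * ((r : ℝ) + 2) ^ 2) := by
      rw [hK1, hK2]
      positivity
    have h0' : (K1 * K2 * (((s : ℝ) + 2) ^ 2 * ((r : ℝ) + 2) ^ 2)) * 0 ≤
        (K1 * K2 * (((s : ℝ) + 2) ^ 2 * ((r : ℝ) + 2) ^ 2)) * W := by
      rw [mul_zero]
      calc (0:ℝ) ≤ K1 * K2 * (((s : ℝ) + 2) ^ 2 * ((r : ℝ) + 2) ^ 2 * W) := h0
        _ = (K1 * K2 * (((s : ℝ) + 2) ^ 2 * ((r : ℝ) + 2) ^ 2)) * W := by ring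
    have h3 : (0 : ℝ) ≤ W := le_of_mul_le_mul_left h0' hKpos
    rw [hW, hF'] at h3
    calc lam = ((((s : ℝ) + 2) * ((r : ℝ) + 2)) / (((s : ℝ) + 1) * ((r : ℝ) + 1))) *
          (lam * (((s : ℝ) + 1) * ((r : ℝ) + 1)) / (((s : ℝ) + 2) * ((r : ℝ) + 2))) := by
          field_simp
      _ ≤ ((((s : ℝ) + 2) * ((r : ℝ) + 2)) / (((s : ℝ) + 1) * ((r : ℝ) + 1))) * sInf V := by
        refine mul_le_mul_of_nonneg_left ?_ (by positivity)
        linarith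
end
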